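/- Let n ≥ 1 and let g : ℝⁿ → [0, ∞) be locally integrable. Let x ∈ ℝⁿ, r > 0, and let ξ₁ ∈ B_r(x). Then for every y ∈ B_r(x) one has the pointwise localization inequality M g(y) ≤ max{ M^{2r}(χ_{B_{2r}(x)} g)(y), 3ⁿ · M g(ξ₁) }, where χ_{B_{2r}(x)} denotes the indicator function of the ball B_{2r}(x). -/

import Mathlib

/-!
Pointwise localization of the Hardy–Littlewood maximal function (used in
Lemma 4.2 of the paper): for `ξ₁ ∈ B_r(x)` and every `y ∈ B_r(x)`,
`M g(y) ≤ max ( M^{2r}(χ_{B_{2r}(x)} g)(y), 3ⁿ M g(ξ₁) )`.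
-/

open MeasureTheory Metric Set ENNReal

noncomputable section

/-- Fractional maximal function `M_α g`. -/
def fracMax {n : ℕ} (α : ℝ) (g : EuclideanSpace ℝ (Fin n) → ℝ≥0∞)
    (x : EuclideanSpace ℝ (Fin n)) : ℝ≥0∞ :=
  ⨆ ρ ∈ Set.Ioi (0 : ℝ),
    ENNReal.ofReal (ρ ^ α) * ((volume (ball x ρ))⁻¹ * ∫⁻ y in ball x ρ, g y)

/-- Cut-off fractional maximal function `M_α^r g` (supremum over radii `0 < ρ < r`). -/
def fracMaxCut {n : ℕ} (α r : ℝ) (g : EuclideanSpace ℝ (Fin n) → ℝ≥0∞)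
    (x : EuclideanSpace ℝ (Fin n)) : ℝ≥0∞ :=
  ⨆ ρ ∈ Set.Ioo (0 : ℝ) r,
    ENNReal.ofReal (ρ ^ α) * ((volume (ball x ρ))⁻¹ * ∫⁻ y in ball x ρ, g y)

theorem statement4 (n : ℕ) (hn : 1 ≤ n) (g : EuclideanSpace ℝ (Fin n) → ℝ)
    (hg0 : ∀ z, 0 ≤ g z) (hg : LocallyIntegrable g volume)
    (x ξ₁ : EuclideanSpace ℝ (Fin n)) (r : ℝ) (hr : 0 < r)
    (hξ₁ : ξ₁ ∈ ball x r) :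
    ∀ y ∈ ball x r,
      fracMax 0 (fun z => ENNReal.ofReal (g z)) y ≤
        max
          (fracMaxCut 0 (2 * r)
            (fun z => ENNReal.ofReal (((ball x (2 * r)).indicator g) z)) y)
          ((3 : ℝ≥0∞) ^ n * fracMax 0 (fun z => ENNReal.ofReal (g z)) ξ₁) := by
  intro y hy
  rw [fracMax]
  refine iSup₂_le fun ρ hρ => ?_
  rw [mem_Ioi] at hρ
  simp only [Real.rpow_zero, ENNReal.ofReal_one, one_mul]
  rcases lt_or_ge ρ r with h | h
  · -- small radius: use cutoff term
    refine le_max_of_le_left ?_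
    have hsub : ball y ρ ⊆ ball x (2 * r) := by
      intro z hz
      rw [mem_ball] at *
      calc dist z x ≤ dist z y + dist y x := dist_triangle _ _ _
        _ < ρ + r := by linarith
        _ ≤ 2 * r := by linarith
    have heq : ∫⁻ z in ball y ρ, ENNReal.ofReal (g z)
        = ∫⁻ z in ball y ρ, ENNReal.ofReal (((ball x (2 * r)).indicator g) z) := by
      refine setLIntegral_congr_fun measurableSet_ball (fun z hz => ?_)
      rw [indicator_of_mem (hsub hz)]
    rw [heq, fracMaxCut]
    have hmem : ρ ∈ Set.Ioo (0 : ℝ) (2 * r) := ⟨hρ, by linarith⟩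
    refine le_trans ?_ (le_iSup₂ (f := fun ρ _ =>
      ENNReal.ofReal (ρ ^ (0:ℝ)) * ((volume (ball y ρ))⁻¹ *
        ∫⁻ z in ball y ρ, ENNReal.ofReal (((ball x (2 * r)).indicator g) z))) ρ hmem)
    simp
  · -- large radius
    refine le_max_of_le_right ?_
    have hsub : ball y ρ ⊆ ball ξ₁ (3 * ρ) := by
      intro z hz
      rw [mem_ball] at *
      calc dist z ξ₁ ≤ dist z y + dist y x + dist x ξ₁ :=
        (dist_triangle _ _ _).trans (by gcongr; exact dist_triangle _ _ _)
        _ < ρ + r + r := by rw [dist_comm x ξ₁] at *; linarith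
        _ ≤ 3 * ρ := by linarith
    haveI : Nontrivial (EuclideanSpace ℝ (Fin n)) :=
      Module.nontrivial_of_finrank_pos (R := ℝ)
        (by rw [finrank_euclideanSpace_fin]; omega)
    have hvol : volume (ball ξ₁ (3 * ρ)) = 3 ^ n * volume (ball y ρ) := by
      rw [Measure.addHaar_ball _ _ (by positivity : (0:ℝ) ≤ 3 * ρ),
        Measure.addHaar_ball _ _ hρ.le, finrank_euclideanSpace_fin, mul_pow,
        ENNReal.ofReal_mul (by positivity), mul_assoc]
      congr 1
      rw [ENNReal.ofReal_pow (by norm_num)]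
      norm_num
    have h0 : volume (ball y ρ) ≠ 0 := (measure_ball_pos volume y hρ).ne'
    have htop : volume (ball y ρ) ≠ ⊤ := measure_ball_lt_top.ne
    have hinv : (volume (ball y ρ))⁻¹ = 3 ^ n * (volume (ball ξ₁ (3 * ρ)))⁻¹ := by
      rw [hvol, ENNReal.mul_inv (Or.inr htop) (Or.inr h0), ← mul_assoc,
        ENNReal.mul_inv_cancel (by simp) (by simp), one_mul]
    rw [hinv]
    have hle : ∫⁻ z in ball y ρ, ENNReal.ofReal (g z)
        ≤ ∫⁻ z in ball ξ₁ (3 * ρ), ENNReal.ofReal (g z) :=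
      lintegral_mono_set hsub
    calc 3 ^ n * (volume (ball ξ₁ (3 * ρ)))⁻¹ * ∫⁻ z in ball y ρ, ENNReal.ofReal (g z)
        ≤ 3 ^ n * ((volume (ball ξ₁ (3 * ρ)))⁻¹ * ∫⁻ z in ball ξ₁ (3 * ρ), ENNReal.ofReal (g z)) := by
          rw [mul_assoc]; gcongr
      _ ≤ 3 ^ n * fracMax 0 (fun z => ENNReal.ofReal (g z)) ξ₁ := by
          gcongr
          rw [fracMax]
          have hmem : 3 * ρ ∈ Set.Ioi (0:ℝ) := by simp [mem_Ioi]; positivity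
          refine le_trans ?_ (le_iSup₂ (f := fun ρ' _ =>
            ENNReal.ofReal (ρ' ^ (0:ℝ)) * ((volume (ball ξ₁ ρ'))⁻¹ *
              ∫⁻ z in ball ξ₁ ρ', ENNReal.ofReal (g z))) (3 * ρ) hmem)
          simp
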